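/- Let λ ∈ ℂ with λ ≠ 0 and let f be a function holomorphic near λ and near conj(λ) satisfying conj(f^{(j)}(λ)) = f^{(j)}(conj(λ)) for all j ≤ k−1. Then f applied (as a primary matrix function) to the real Jordan block C_k(λ) is the real 2k×2k block upper triangular Toeplitz matrix with blocks C(f^{(j)}(λ)/j!) on the jth block superdiagonal, where C(μ) = [[Re μ, Im μ], [−Im μ, Re μ]]. -/
import Mathlib


open Matrix

/-- The 2×2 block `C(μ) = [[Re μ, Im μ], [−Im μ, Re μ]]` (with real entries,
viewed in `ℂ`). -/
def Cblk (z : ℂ) : Matrix (Fin 2) (Fin 2) ℂ :=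
  !![(z.re : ℂ), (z.im : ℂ); -(z.im : ℂ), (z.re : ℂ)]

/-- `S = [[−i, −i], [1, −1]]`. -/
def Smat : Matrix (Fin 2) (Fin 2) ℂ := !![-Complex.I, -Complex.I; 1, -1]

/-- `S_k = ⊕_{i=1}^k S`. -/
def Sk (k : ℕ) : Matrix (Fin k × Fin 2) (Fin k × Fin 2) ℂ :=
  Matrix.of fun p q => if p.1 = q.1 then Smat p.2 q.2 else 0

/-- The perfect-shuffle permutation matrix `P_k`. -/
def Pmat (k : ℕ) : Matrix (Fin k × Fin 2) (Fin k ⊕ Fin k) ℂ :=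
  Matrix.of fun p q =>
    match q with
    | Sum.inl i => if p = (i, 0) then 1 else 0
    | Sum.inr i => if p = (i, 1) then 1 else 0

/-- `f(J_k(μ))`: the upper triangular Toeplitz matrix with `f^{(j)}(μ)/j!` on
the `j`th superdiagonal, the value of a primary matrix function on the Jordan
block `J_k(μ)`. -/
noncomputable def fJordan (k : ℕ) (f : ℂ → ℂ) (μ : ℂ) : Matrix (Fin k) (Fin k) ℂ :=
  Matrix.of fun i j =>
    if (i : ℕ) ≤ (j : ℕ) then
      iteratedDeriv ((j : ℕ) - (i : ℕ)) f μ / (Nat.factorial ((j : ℕ) - (i : ℕ)) : ℂ)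
    else 0

noncomputable def Tmat : Matrix (Fin 2) (Fin 2) ℂ := !![Complex.I/2, 1/2; Complex.I/2, -(1/2)]

noncomputable def Tk (k : ℕ) : Matrix (Fin k × Fin 2) (Fin k × Fin 2) ℂ :=
  Matrix.of fun p q => if p.1 = q.1 then Tmat p.2 q.2 else 0

lemma Smat_mul_Tmat : Smat * Tmat = 1 := by
  ext i j
  fin_cases i <;> fin_cases j <;>
    simp [Smat, Tmat, Matrix.mul_apply, Fin.sum_univ_two, Matrix.one_apply,
      Complex.ext_iff] <;> norm_num

lemma Sk_mul_Tk (k : ℕ) : Sk k * Tk k = 1 := by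
  ext ⟨i, s⟩ ⟨j, t⟩
  rw [Matrix.mul_apply, Fintype.sum_prod_type]
  rw [Finset.sum_eq_single i (fun b _ hb => by simp [Sk, Ne.symm hb]) (by simp)]
  by_cases h : i = j
  · subst h
    simp only [Sk, Tk, Matrix.of_apply, if_pos rfl, if_true, eq_self_iff_true]
    have h2 := congrFun (congrFun Smat_mul_Tmat s) t
    rw [Matrix.mul_apply] at h2
    rw [h2]
    simp [Matrix.one_apply, Prod.ext_iff]
  · simp [Sk, Tk, h, Matrix.one_apply, Prod.ext_iff]

lemma Sk_inv (k : ℕ) : (Sk k)⁻¹ = Tk k := Matrix.inv_eq_right_inv (Sk_mul_Tk k)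

def gmap {k : ℕ} (p : Fin k × Fin 2) : Fin k ⊕ Fin k :=
  if p.2 = 0 then Sum.inl p.1 else Sum.inr p.1

lemma Pmat_apply {k : ℕ} (p : Fin k × Fin 2) (q : Fin k ⊕ Fin k) :
    Pmat k p q = if gmap p = q then 1 else 0 := by
  obtain ⟨i, s⟩ := p
  fin_cases s <;> cases q <;>
    simp [Pmat, gmap, Prod.ext_iff, eq_comm]

lemma PFP {k : ℕ} (F : Matrix (Fin k ⊕ Fin k) (Fin k ⊕ Fin k) ℂ) :
    Pmat k * F * (Pmat k)ᵀ = Matrix.of fun p q => F (gmap p) (gmap q) := by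
  ext p q
  rw [Matrix.mul_apply]
  have h1 : ∀ r, (Pmat k * F) p r = F (gmap p) r := by
    intro r
    rw [Matrix.mul_apply]
    rw [Finset.sum_eq_single (gmap p)]
    · simp [Pmat_apply]
    · intro b _ hb; simp [Pmat_apply, Ne.symm hb]
    · simp
  simp only [h1, Matrix.transpose_apply, Pmat_apply, mul_ite, mul_one, mul_zero]
  rw [Finset.sum_ite_eq]
  simp


/-- for `λ ≠ 0` and `f` holomorphic near `λ` and `conj λ` with
`conj (f^{(j)}(λ)) = f^{(j)}(conj λ)` for `j ≤ k−1`, the primary matrix function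
`f(C_k(λ)) = S_k·P_k·(f(J_k(λ)) ⊕ f(J_k(conj λ)))·(S_k·P_k)⁻¹` equals the real
block upper triangular Toeplitz matrix with blocks `C(f^{(j)}(λ)/j!)` on the
`j`th block superdiagonal. -/
theorem stmt_19 (k : ℕ) (z : ℂ) (hz : z ≠ 0) (f : ℂ → ℂ)
    (hf₁ : AnalyticAt ℂ f z) (hf₂ : AnalyticAt ℂ f (starRingEnd ℂ z))
    (hconj : ∀ j < k,
      starRingEnd ℂ (iteratedDeriv j f z) = iteratedDeriv j f (starRingEnd ℂ z)) :
    Sk k * Pmat k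
        * Matrix.fromBlocks (fJordan k f z) 0 0 (fJordan k f (starRingEnd ℂ z))
        * (Pmat k)ᵀ * (Sk k)⁻¹
      = Matrix.of (fun p q : Fin k × Fin 2 =>
          if (p.1 : ℕ) ≤ (q.1 : ℕ) then
            Cblk (iteratedDeriv ((q.1 : ℕ) - (p.1 : ℕ)) f z
              / (Nat.factorial ((q.1 : ℕ) - (p.1 : ℕ)) : ℂ)) p.2 q.2
          else 0) := by
  rw [Sk_inv]
  have hassoc : ∀ F : Matrix (Fin k ⊕ Fin k) (Fin k ⊕ Fin k) ℂ,
      Sk k * Pmat k * F * (Pmat k)ᵀ * Tk k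
      = Sk k * (Pmat k * F * (Pmat k)ᵀ) * Tk k := by
    intro F
    rw [Matrix.mul_assoc (Sk k), Matrix.mul_assoc (Sk k), Matrix.mul_assoc (Pmat k)]
  rw [hassoc, PFP]
  set F := Matrix.fromBlocks (fJordan k f z) 0 0 (fJordan k f (starRingEnd ℂ z)) with hF
  ext ⟨i, s⟩ ⟨j, t⟩
  rw [Matrix.mul_apply, Fintype.sum_prod_type]
  rw [Finset.sum_eq_single j (fun b _ hb => by simp [Tk, hb]) (by simp)]
  have hSY : ∀ c : Fin 2,
      (Sk k * Matrix.of fun p q => F (gmap p) (gmap q)) (i, s) (j, c)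
        = ∑ b : Fin 2, Smat s b * F (gmap (i, b)) (gmap (j, c)) := by
    intro c
    rw [Matrix.mul_apply, Fintype.sum_prod_type]
    rw [Finset.sum_eq_single i (fun b _ hb => by simp [Sk, Ne.symm hb]) (by simp)]
    simp [Sk]
  simp only [Tk, Matrix.of_apply, if_pos rfl, hSY]
  have key2 : ∀ b c : Fin 2, b ≠ c → F (gmap (i, b)) (gmap (j, c)) = 0 := by
    intro b c hbc
    fin_cases b <;> fin_cases c <;> simp [gmap, hF] <;> simp_all
  have keyA : F (gmap (i, 0)) (gmap (j, 0)) = fJordan k f z i j := by simp [gmap, hF]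
  have keyB : F (gmap (i, 1)) (gmap (j, 1)) = fJordan k f (starRingEnd ℂ z) i j := by
    simp [gmap, hF]
  simp only [Fin.sum_univ_two]
  rw [key2 0 1 (by decide), key2 1 0 (by decide), keyA, keyB]
  simp only [mul_zero, zero_mul, add_zero, zero_add]
  by_cases hij : (i : ℕ) ≤ (j : ℕ)
  · have hm : (j : ℕ) - (i : ℕ) < k := lt_of_le_of_lt (Nat.sub_le _ _) j.isLt
    set m := (j : ℕ) - (i : ℕ) with hmdef
    set w := iteratedDeriv m f z with hw
    set a := w / (m.factorial : ℂ) with ha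
    have hcz : fJordan k f (starRingEnd ℂ z) i j = starRingEnd ℂ a := by
      simp only [fJordan, Matrix.of_apply, if_pos hij, ← hmdef, ha, map_div₀, map_natCast]
      rw [← hconj m hm, hw]
    have hz' : fJordan k f z i j = a := by
      simp only [fJordan, Matrix.of_apply, ← hmdef, if_pos hij, ← hw, ← ha]
    clear_value a w
    rw [hcz, hz']
    simp only [Matrix.of_apply, if_pos hij, ← hmdef, ← hw, ← ha]
    have hre : a + starRingEnd ℂ a = 2 * (a.re : ℂ) := by rw [Complex.add_conj]; push_cast; ring
    have him : a - starRingEnd ℂ a = 2 * (a.im : ℂ) * Complex.I := by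
      rw [Complex.sub_conj]; push_cast; ring
    fin_cases s <;> fin_cases t <;>
      simp only [Smat, Tmat, Cblk, Matrix.cons_val', Matrix.cons_val_zero,
        Matrix.cons_val_one, Matrix.head_cons, Matrix.head_fin_const,
        Matrix.empty_val', Matrix.cons_val_fin_one, Fin.mk_zero, Fin.mk_one,
        Fin.isValue, Fin.zero_eta, Matrix.of_apply, if_true]
    · linear_combination (-(a + starRingEnd ℂ a)/2) * Complex.I_sq + hre/2
    · linear_combination (-Complex.I/2) * him + (-(a.im : ℂ)) * Complex.I_sq
    · linear_combination (Complex.I/2) * him + ((a.im : ℂ)) * Complex.I_sq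
    · linear_combination hre/2
  · have hij' : ¬ i ≤ j := fun h => hij (Fin.le_def.mp h)
    simp [fJordan, hij, hij']
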